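/- arXiv:1205.1769 — 2 statements merged into one kernel-verified Lean document; each statement's English description precedes it below -/
import Mathlib

section
/- Let σ : [0,1] → ℝ be continuous, strictly positive, and nonincreasing. If g : [0,1] → ℝ is absolutely continuous with g(0)=0 and for all t ∈ [0,1], ∫₀ᵗ g'(s)²/(2σ(s)²) ds ≤ t, then g(1) ≤ √2 ∫₀¹ σ(s) ds. -/
open MeasureTheory Set intervalIntegral Filter Topology

private lemma abel_aux (a d : ℕ → ℝ) (ha : ∀ i, a (i+1) ≤ a i) (ha0 : ∀ i, 0 ≤ a i)
    (hd : ∀ i, d i ≤ 0) (hd0 : d 0 = 0) :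
    ∀ n, ∑ i ∈ Finset.range n, a i * (d (i+1) - d i) ≤ a n * d n := by
  intro n
  induction n with
  | zero => simp [hd0]
  | succ n ih =>
    rw [Finset.sum_range_succ]
    have h1 : (a n - a (n+1)) * d (n+1) ≤ 0 :=
      mul_nonpos_of_nonneg_of_nonpos (sub_nonneg.2 (ha n)) (hd (n+1))
    nlinarith [ih, ha0 n]

/-- **Variational lemma (Lemma 2.2).** If `σ` is continuous, strictly positive and
nonincreasing on `[0,1]`, and `g` is absolutely continuous (with density `g'`),
`g 0 = 0`, and the cumulative energy constraint
`∫₀ᵗ g'(s)²/(2 σ(s)²) ds ≤ t` holds (with finite energy) for all `t ∈ [0,1]`,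
then `g 1 ≤ √2 ∫₀¹ σ(s) ds`. -/
theorem variational_lemma
    (σ : ℝ → ℝ) (hσc : ContinuousOn σ (Icc 0 1))
    (hσpos : ∀ t ∈ Icc (0:ℝ) 1, 0 < σ t)
    (hσmono : AntitoneOn σ (Icc 0 1))
    (g g' : ℝ → ℝ)
    (hg'int : IntegrableOn g' (Icc 0 1))
    (hAC : ∀ t ∈ Icc (0:ℝ) 1, g t = ∫ s in (0:ℝ)..t, g' s)
    (hg0 : g 0 = 0)
    (hEnergyInt : IntegrableOn (fun s => (g' s) ^ 2 / (2 * (σ s) ^ 2)) (Icc 0 1))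
    (hConstraint : ∀ t ∈ Icc (0:ℝ) 1,
      (∫ s in (0:ℝ)..t, (g' s) ^ 2 / (2 * (σ s) ^ 2)) ≤ t) :
    g 1 ≤ Real.sqrt 2 * ∫ s in (0:ℝ)..1, σ s := by
  have h01 : (0:ℝ) ≤ 1 := zero_le_one
  have h0mem : (0:ℝ) ∈ Icc (0:ℝ) 1 := left_mem_Icc.2 h01
  have h1mem : (1:ℝ) ∈ Icc (0:ℝ) 1 := right_mem_Icc.2 h01
  set e : ℝ → ℝ := fun s => (g' s) ^ 2 / (2 * (σ s) ^ 2) with he_def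
  have he_nonneg : ∀ s, 0 ≤ e s := fun s => div_nonneg (sq_nonneg _) (by positivity)
  have hσnn : ∀ x ∈ Icc (0:ℝ) 1, 0 ≤ σ x := fun x hx => (hσpos x hx).le
  have hσle : ∀ x ∈ Icc (0:ℝ) 1, σ x ≤ σ 0 := fun x hx => hσmono h0mem hx hx.1
  -- integrability facts
  have hσIntOn : IntegrableOn σ (Icc 0 1) := hσc.integrableOn_Icc
  have hσe_int : IntegrableOn (fun s => σ s * e s) (Icc 0 1) := by
    refine Integrable.bdd_mul (c := σ 0) hEnergyInt
      (hσc.aestronglyMeasurable measurableSet_Icc) ?_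
    refine (ae_restrict_iff' measurableSet_Icc).2 (ae_of_all _ fun x hx => ?_)
    rw [Real.norm_eq_abs, abs_of_nonneg (hσnn x hx)]
    exact hσle x hx
  have hsubInt : ∀ a b : ℝ, a ∈ Icc (0:ℝ) 1 → b ∈ Icc (0:ℝ) 1 →
      ∀ f : ℝ → ℝ, IntegrableOn f (Icc 0 1) → IntervalIntegrable f volume a b := by
    intro a b ha hb f hf
    apply IntegrableOn.intervalIntegrable
    apply hf.mono_set
    intro x hx
    exact ⟨le_trans (le_inf ha.1 hb.1) hx.1, le_trans hx.2 (sup_le ha.2 hb.2)⟩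
  have hIe : ∀ a b : ℝ, a ∈ Icc (0:ℝ) 1 → b ∈ Icc (0:ℝ) 1 → IntervalIntegrable e volume a b :=
    fun a b ha hb => hsubInt a b ha hb e hEnergyInt
  have hIσ : ∀ a b : ℝ, a ∈ Icc (0:ℝ) 1 → b ∈ Icc (0:ℝ) 1 → IntervalIntegrable σ volume a b :=
    fun a b ha hb => hsubInt a b ha hb σ hσIntOn
  have hIσe : ∀ a b : ℝ, a ∈ Icc (0:ℝ) 1 → b ∈ Icc (0:ℝ) 1 →
      IntervalIntegrable (fun s => σ s * e s) volume a b :=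
    fun a b ha hb => hsubInt a b ha hb _ hσe_int
  -- Hardy-type rearrangement inequality: ∫ σ e ≤ ∫ σ
  have key : ∀ n : ℕ, 1 ≤ n →
      (∫ s in (0:ℝ)..1, σ s * e s) ≤ (∫ s in (0:ℝ)..1, σ s) + (σ 0 - σ 1) / n := by
    intro n hn
    have hNpos : (0:ℝ) < (n:ℝ) := by exact_mod_cast hn
    set t : ℕ → ℝ := fun i => min ((i:ℝ)/(n:ℝ)) 1 with ht_def
    have htmem : ∀ i, t i ∈ Icc (0:ℝ) 1 := fun i =>
      ⟨le_min (div_nonneg (Nat.cast_nonneg i) hNpos.le) zero_le_one, min_le_right _ _⟩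
    have htmono : ∀ i, t i ≤ t (i+1) := by
      intro i
      exact min_le_min ((div_le_div_iff_of_pos_right hNpos).2 (by exact_mod_cast Nat.le_succ i)) le_rfl
    have ht0 : t 0 = 0 := by simp [ht_def]
    have htn : t n = 1 := by simp [ht_def, div_self hNpos.ne']
    have hteq : ∀ i ≤ n, t i = (i:ℝ)/(n:ℝ) := by
      intro i hi
      exact min_eq_left ((div_le_one hNpos).2 (by exact_mod_cast hi))
    have htd : ∀ i < n, t (i+1) - t i = 1/(n:ℝ) := by
      intro i hi
      rw [hteq i hi.le, hteq (i+1) hi]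
      push_cast
      ring
    set E : ℝ → ℝ := fun x => ∫ s in (0:ℝ)..x, e s with hE_def
    have stepB : ∀ i < n, (∫ s in t i..t (i+1), σ s * e s)
        ≤ σ (t i) * (E (t (i+1)) - E (t i)) := by
      intro i _
      have h1 : (∫ s in t i..t (i+1), σ s * e s)
          ≤ ∫ s in t i..t (i+1), σ (t i) * e s := by
        apply intervalIntegral.integral_mono_on (htmono i)
          (hIσe _ _ (htmem i) (htmem (i+1)))
          ((hIe _ _ (htmem i) (htmem (i+1))).const_mul _)
        intro x hx
        have hx01 : x ∈ Icc (0:ℝ) 1 := ⟨(htmem i).1.trans hx.1, hx.2.trans (htmem (i+1)).2⟩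
        exact mul_le_mul_of_nonneg_right (hσmono (htmem i) hx01 hx.1) (he_nonneg x)
      have h2 : (∫ s in t i..t (i+1), σ (t i) * e s)
          = σ (t i) * (E (t (i+1)) - E (t i)) := by
        rw [intervalIntegral.integral_const_mul]
        congr 1
        exact (intervalIntegral.integral_interval_sub_left
          (hIe 0 (t (i+1)) h0mem (htmem _)) (hIe 0 (t i) h0mem (htmem _))).symm
      linarith
    have stepA : (∫ s in (0:ℝ)..1, σ s * e s)
        = ∑ i ∈ Finset.range n, ∫ s in t i..t (i+1), σ s * e s := by
      have h := intervalIntegral.sum_integral_adjacent_intervals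
        (μ := volume) (a := t) (f := fun s => σ s * e s) (n := n)
        (fun k _ => hIσe _ _ (htmem k) (htmem (k+1)))
      rw [ht0, htn] at h
      exact h.symm
    have habel : ∑ i ∈ Finset.range n,
        σ (t i) * ((E (t (i+1)) - t (i+1)) - (E (t i) - t i))
        ≤ σ (t n) * (E (t n) - t n) :=
      abel_aux (fun i => σ (t i)) (fun i => E (t i) - t i)
        (fun i => hσmono (htmem i) (htmem (i+1)) (htmono i))
        (fun i => (hσpos _ (htmem i)).le)
        (fun i => sub_nonpos.2 (hConstraint (t i) (htmem i)))
        (by show E (t 0) - t 0 = 0; rw [ht0]; simp [hE_def]) n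
    have hnn : σ (t n) * (E (t n) - t n) ≤ 0 :=
      mul_nonpos_of_nonneg_of_nonpos (hσpos _ (htmem n)).le
        (sub_nonpos.2 (hConstraint _ (htmem n)))
    have hsplit : ∑ i ∈ Finset.range n,
        σ (t i) * ((E (t (i+1)) - t (i+1)) - (E (t i) - t i))
        = ∑ i ∈ Finset.range n, σ (t i) * (E (t (i+1)) - E (t i))
          - ∑ i ∈ Finset.range n, σ (t i) * (t (i+1) - t i) := by
      rw [← Finset.sum_sub_distrib]
      exact Finset.sum_congr rfl fun i _ => by ring
    have hsum1 : ∑ i ∈ Finset.range n, σ (t i) * (E (t (i+1)) - E (t i))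
        ≤ ∑ i ∈ Finset.range n, σ (t i) * (t (i+1) - t i) := by linarith
    have hD1 : ∀ i < n, σ (t (i+1)) * (t (i+1) - t i) ≤ ∫ s in t i..t (i+1), σ s := by
      intro i _
      have h := intervalIntegral.integral_mono_on (μ := volume) (htmono i)
        (_root_.intervalIntegrable_const (c := σ (t (i+1))))
        (hIσ _ _ (htmem i) (htmem (i+1)))
        (fun x hx => hσmono
          (⟨(htmem i).1.trans hx.1, hx.2.trans (htmem (i+1)).2⟩ : x ∈ Icc (0:ℝ) 1)
          (htmem (i+1)) hx.2)
      rwa [intervalIntegral.integral_const, smul_eq_mul, mul_comm] at h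
    have hsum_int : ∑ i ∈ Finset.range n, (∫ s in t i..t (i+1), σ s)
        = ∫ s in (0:ℝ)..1, σ s := by
      have h := intervalIntegral.sum_integral_adjacent_intervals
        (μ := volume) (a := t) (f := σ) (n := n)
        (fun k _ => hIσ _ _ (htmem k) (htmem (k+1)))
      rwa [ht0, htn] at h
    have htele : ∑ i ∈ Finset.range n, (σ (t i) - σ (t (i+1))) * (t (i+1) - t i)
        = (σ 0 - σ 1) / n := by
      have hcg : ∀ i ∈ Finset.range n, (σ (t i) - σ (t (i+1))) * (t (i+1) - t i)
          = (σ (t i) - σ (t (i+1))) * (1/(n:ℝ)) := by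
        intro i hi; rw [htd i (Finset.mem_range.1 hi)]
      rw [Finset.sum_congr rfl hcg, ← Finset.sum_mul,
        Finset.sum_range_sub' (fun i => σ (t i)), ht0, htn]
      ring
    calc (∫ s in (0:ℝ)..1, σ s * e s)
        = ∑ i ∈ Finset.range n, ∫ s in t i..t (i+1), σ s * e s := stepA
      _ ≤ ∑ i ∈ Finset.range n, σ (t i) * (E (t (i+1)) - E (t i)) :=
          Finset.sum_le_sum fun i hi => stepB i (Finset.mem_range.1 hi)
      _ ≤ ∑ i ∈ Finset.range n, σ (t i) * (t (i+1) - t i) := hsum1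
      _ = ∑ i ∈ Finset.range n, (σ (t (i+1)) * (t (i+1) - t i)
            + (σ (t i) - σ (t (i+1))) * (t (i+1) - t i)) :=
          Finset.sum_congr rfl fun i _ => by ring
      _ = ∑ i ∈ Finset.range n, σ (t (i+1)) * (t (i+1) - t i)
            + ∑ i ∈ Finset.range n, (σ (t i) - σ (t (i+1))) * (t (i+1) - t i) :=
          Finset.sum_add_distrib
      _ ≤ ∑ i ∈ Finset.range n, (∫ s in t i..t (i+1), σ s) + (σ 0 - σ 1)/n := by
          rw [htele]
          exact add_le_add_left
            (Finset.sum_le_sum fun i hi => hD1 i (Finset.mem_range.1 hi)) _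
      _ = (∫ s in (0:ℝ)..1, σ s) + (σ 0 - σ 1)/n := by rw [hsum_int]
  have hardy : (∫ s in (0:ℝ)..1, σ s * e s) ≤ ∫ s in (0:ℝ)..1, σ s := by
    have hlim : Tendsto (fun n : ℕ => (∫ s in (0:ℝ)..1, σ s) + (σ 0 - σ 1)/(n:ℝ)) atTop
        (𝓝 ((∫ s in (0:ℝ)..1, σ s) + 0)) :=
      tendsto_const_nhds.add (tendsto_const_div_atTop_nhds_zero_nat _)
    rw [add_zero] at hlim
    exact ge_of_tendsto hlim (eventually_atTop.2 ⟨1, key⟩)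
  -- pointwise bound and conclusion
  have hs2 : (0:ℝ) < Real.sqrt 2 := Real.sqrt_pos.2 two_pos
  have hs2sq : Real.sqrt 2 * Real.sqrt 2 = 2 := Real.mul_self_sqrt two_pos.le
  have hg1 : g 1 = ∫ s in (0:ℝ)..1, g' s := hAC 1 h1mem
  have hmono2 : (∫ s in (0:ℝ)..1, g' s)
      ≤ ∫ s in (0:ℝ)..1, (σ s * e s + σ s) / Real.sqrt 2 := by
    have hrhs_int : IntegrableOn (fun s => (σ s * e s + σ s) / Real.sqrt 2) (Icc 0 1) :=
      (hσe_int.add hσIntOn).div_const _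
    apply intervalIntegral.integral_mono_on h01
      (hsubInt 0 1 h0mem h1mem g' hg'int)
      (hsubInt 0 1 h0mem h1mem _ hrhs_int)
    intro x hx
    have hc : 0 < σ x := hσpos x hx
    rw [le_div_iff₀ hs2]
    have hce : σ x * e x = (g' x)^2 / (2 * σ x) := by
      rw [he_def]
      field_simp
    rw [hce]
    have h2 : (g' x - Real.sqrt 2 * σ x)^2
        = (g' x)^2 - 2*(Real.sqrt 2)*(g' x)*(σ x) + 2*(σ x)^2 := by
      linear_combination (σ x ^ 2) * hs2sq
    have hnum : 0 ≤ ((g' x)^2 - 2*(Real.sqrt 2)*(g' x)*(σ x) + 2*(σ x)^2) / (2 * σ x) := by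
      rw [← h2]
      exact div_nonneg (sq_nonneg _) (by linarith)
    have hiden : ((g' x)^2 - 2*(Real.sqrt 2)*(g' x)*(σ x) + 2*(σ x)^2) / (2 * σ x)
        = (g' x)^2/(2*σ x) + σ x - g' x * Real.sqrt 2 := by
      field_simp
      ring
    linarith [hnum, hiden.symm ▸ hnum]
  have hinteq : (∫ s in (0:ℝ)..1, (σ s * e s + σ s) / Real.sqrt 2)
      = ((∫ s in (0:ℝ)..1, σ s * e s) + ∫ s in (0:ℝ)..1, σ s) / Real.sqrt 2 := by
    rw [intervalIntegral.integral_div,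
      intervalIntegral.integral_add (hIσe 0 1 h0mem h1mem) (hIσ 0 1 h0mem h1mem)]
  have hfin : ((∫ s in (0:ℝ)..1, σ s) + (∫ s in (0:ℝ)..1, σ s)) / Real.sqrt 2
      = Real.sqrt 2 * ∫ s in (0:ℝ)..1, σ s := by
    rw [div_eq_iff hs2.ne']
    linear_combination -(∫ s in (0:ℝ)..1, σ s) * hs2sq
  calc g 1 = ∫ s in (0:ℝ)..1, g' s := hg1
    _ ≤ ((∫ s in (0:ℝ)..1, σ s * e s) + ∫ s in (0:ℝ)..1, σ s) / Real.sqrt 2 := by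
        rw [← hinteq]; exact hmono2
    _ ≤ ((∫ s in (0:ℝ)..1, σ s) + (∫ s in (0:ℝ)..1, σ s)) / Real.sqrt 2 := by
        gcongr
    _ = Real.sqrt 2 * ∫ s in (0:ℝ)..1, σ s := hfin
end

section
/- Let B be a standard one-dimensional Brownian motion started at 0. There exist constants c, c₄ > 0 such that for all T ≥ 1, P( Leb{s ∈ [0,T] : |B_s| ≤ c T^{1/3}} ≥ T/2 ) ≤ e^{−c₄ T^{1/3}}. -/
set_option maxHeartbeats 1000000

open MeasureTheory ProbabilityTheory Set

/-- A standard one-dimensional Brownian motion started at `0` under the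
probability measure `μ`: measurable marginals, continuous paths, Gaussian
increments of the right variance, and independent increments. -/
structure IsStdBrownianMotion {Ω : Type*} [MeasurableSpace Ω] (μ : Measure Ω)
    (B : ℝ → Ω → ℝ) : Prop where
  isProb : IsProbabilityMeasure μ
  meas : ∀ t, Measurable (B t)
  start : ∀ᵐ ω ∂μ, B 0 ω = 0
  cont : ∀ᵐ ω ∂μ, Continuous fun t => B t ω
  incr : ∀ s t : ℝ, 0 ≤ s → s ≤ t →
    μ.map (fun ω => B t ω - B s ω) = gaussianReal 0 (Real.toNNReal (t - s))
  indep : ∀ (n : ℕ) (ts : ℕ → ℝ), Monotone ts → 0 ≤ ts 0 →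
    iIndepFun
      (fun i : Fin n => fun ω => B (ts (i + 1)) ω - B (ts i) ω) μ

namespace BrownianOccAux

open scoped ENNReal NNReal
open Real Filter

variable {Ω : Type*} [MeasurableSpace Ω] {μ : Measure Ω} {W B : ℝ → Ω → ℝ}

lemma gauss_strip (v : ℝ≥0) (g b : ℝ) (hg : 0 < g) (hgv : g ≤ (v : ℝ)) (hb : 0 ≤ b) :
    gaussianReal 0 v (Icc (-b) b) ≤ ENNReal.ofReal (2 * b / Real.sqrt (2 * Real.pi * g)) := by
  have hv : v ≠ 0 := by
    intro h
    rw [h] at hgv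
    simp only [NNReal.coe_zero] at hgv
    linarith
  have hsg : 0 < Real.sqrt (2 * Real.pi * g) := Real.sqrt_pos.2 (by positivity)
  have hsv : 0 < Real.sqrt (2 * Real.pi * (v : ℝ)) := Real.sqrt_pos.2 (by positivity)
  rw [gaussianReal_apply _ hv]
  have hpt : ∀ x : ℝ, gaussianPDF 0 v x ≤ ENNReal.ofReal (Real.sqrt (2 * Real.pi * g))⁻¹ := by
    intro x
    rw [gaussianPDF]
    apply ENNReal.ofReal_le_ofReal
    unfold gaussianPDFReal
    calc (Real.sqrt (2 * Real.pi * (v:ℝ)))⁻¹ * Real.exp (-(x - 0) ^ 2 / (2 * (v:ℝ)))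
        ≤ (Real.sqrt (2 * Real.pi * (v:ℝ)))⁻¹ * 1 := by
          apply mul_le_mul_of_nonneg_left _ (by positivity)
          rw [Real.exp_le_one_iff]
          apply div_nonpos_of_nonpos_of_nonneg
          · simp [sq_nonneg]
          · positivity
      _ ≤ (Real.sqrt (2 * Real.pi * g))⁻¹ := by
          rw [mul_one]
          apply inv_anti₀ hsg
          exact Real.sqrt_le_sqrt (by nlinarith [Real.pi_pos])
  calc ∫⁻ x in Icc (-b) b, gaussianPDF 0 v x
      ≤ ∫⁻ _ in Icc (-b) b, ENNReal.ofReal (Real.sqrt (2 * Real.pi * g))⁻¹ :=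
        lintegral_mono fun x => hpt x
    _ = ENNReal.ofReal (Real.sqrt (2 * Real.pi * g))⁻¹ * volume (Icc (-b) b) :=
        setLIntegral_const _ _
    _ = ENNReal.ofReal (2 * b / Real.sqrt (2 * Real.pi * g)) := by
        rw [Real.volume_Icc, ← ENNReal.ofReal_mul (by positivity)]
        congr 1
        ring


lemma chain_bound (hW : IsStdBrownianMotion μ W) {a g : ℝ} (ha : 0 ≤ a) (hg : 0 < g)
    (k : ℕ) (τ : ℕ → ℝ) (hτ0 : 0 < k → 0 ≤ τ 0)
    (hτ : ∀ i, i + 1 < k → τ i + g ≤ τ (i + 1)) :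
    μ (⋂ i ∈ Finset.range k, {ω | |W (τ i) ω| ≤ a})
      ≤ ENNReal.ofReal (4 * a / Real.sqrt (2 * Real.pi * g)) ^ (k - 1) := by
  haveI := hW.isProb
  rcases k with _ | k
  · simp
  rcases k with _ | K
  · simpa using prob_le_one
  -- k = K + 2
  have hnn : ∀ q, q < K + 2 → 0 ≤ τ q := by
    intro q hq
    induction q with
    | zero => exact hτ0 (by omega)
    | succ p ih =>
      have h1 := hτ p (by omega)
      have h2 := ih (by omega)
      linarith
  have hmono : ∀ q, q < K + 2 → ∀ p, p ≤ q → τ p ≤ τ q := by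
    intro q hq
    induction q with
    | zero => intro p hp; interval_cases p; exact le_refl _
    | succ r ih =>
      intro p hp
      have hstep := hτ r (by omega)
      rcases Nat.lt_or_ge p (r + 1) with h | h
      · have := ih (by omega) p (by omega)
        linarith
      · have : p = r + 1 := by omega
        subst this; exact le_refl _
  set ts : ℕ → ℝ := fun r => if r = 0 then 0 else τ (min (r - 1) (K + 1)) with hts
  have hts_mono : Monotone ts := by
    apply monotone_nat_of_le_succ
    intro r
    rcases r with _ | r
    · simp only [hts, if_pos rfl, if_neg (Nat.succ_ne_zero 0)]
      exact hnn _ (by omega)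
    · simp only [hts, if_neg (Nat.succ_ne_zero r), if_neg (Nat.succ_ne_zero (r+1))]
      apply hmono _ (by omega)
      omega
  have hind := hW.indep (K + 2) ts hts_mono (by simp [hts])
  have hts1 : ∀ j : ℕ, j < K + 2 → ts (j + 1) = τ j := by
    intro j hj
    simp only [hts, if_neg (Nat.succ_ne_zero j), Nat.add_sub_cancel]
    congr 1
    omega
  have hts2 : ∀ j : ℕ, j ≠ 0 → j < K + 2 → ts j = τ (j - 1) := by
    intro j hj hj2
    simp only [hts, if_neg hj]
    congr 1
    omega
  set Q := ENNReal.ofReal (4 * a / Real.sqrt (2 * Real.pi * g)) with hQdef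
  set η : Fin (K + 2) → Ω → ℝ := fun i ω => W (ts ((i : ℕ) + 1)) ω - W (ts (i : ℕ)) ω with hη
  set s : Finset (Fin (K + 2)) := Finset.univ.erase 0 with hs
  have hincl : (⋂ i ∈ Finset.range (K + 2), {ω | |W (τ i) ω| ≤ a})
      ⊆ ⋂ i ∈ s, η i ⁻¹' Icc (-(2 * a)) (2 * a) := by
    intro ω hω
    simp only [Set.mem_iInter, Set.mem_setOf_eq, Finset.mem_range] at hω
    simp only [Set.mem_iInter, Set.mem_preimage, Set.mem_Icc]
    intro i hi
    have hi0 : (i : ℕ) ≠ 0 := by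
      have := (Finset.mem_erase.mp hi).1
      exact fun h => this (Fin.ext h)
    have h1 : |W (τ (i : ℕ)) ω| ≤ a := hω _ i.isLt
    have h2 : |W (τ ((i : ℕ) - 1)) ω| ≤ a := hω _ (by omega)
    rw [hη]
    simp only
    rw [hts1 _ i.isLt, hts2 _ hi0 i.isLt]
    have hb1 := abs_le.mp h1
    have hb2 := abs_le.mp h2
    constructor <;> linarith [hb1.1, hb1.2, hb2.1, hb2.2]
  have hfactor : ∀ i ∈ s, μ (η i ⁻¹' Icc (-(2 * a)) (2 * a)) ≤ Q := by
    intro i hi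
    have hi0 : (i : ℕ) ≠ 0 := by
      have := (Finset.mem_erase.mp hi).1
      exact fun h => this (Fin.ext h)
    have hlt := i.isLt
    have hts0 : 0 ≤ ts (i : ℕ) := by
      have h0 : ts 0 = 0 := by simp [hts]
      have := hts_mono (Nat.zero_le (i : ℕ))
      rw [h0] at this
      exact this
    have hmap : μ.map (η i) = gaussianReal 0 (Real.toNNReal (ts ((i : ℕ) + 1) - ts (i : ℕ))) :=
      hW.incr _ _ hts0 (hts_mono (Nat.le_succ _))
    have hΔ : g ≤ ts ((i : ℕ) + 1) - ts (i : ℕ) := by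
      rw [hts1 _ hlt, hts2 _ hi0 hlt]
      have hgap := hτ ((i : ℕ) - 1) (by omega)
      have heq : (i : ℕ) - 1 + 1 = (i : ℕ) := by omega
      rw [heq] at hgap
      linarith
    have hco : (g : ℝ) ≤ ((Real.toNNReal (ts ((i : ℕ) + 1) - ts (i : ℕ))) : ℝ) := by
      rw [Real.coe_toNNReal _ (by linarith)]
      exact hΔ
    calc μ (η i ⁻¹' Icc (-(2 * a)) (2 * a))
        = μ.map (η i) (Icc (-(2 * a)) (2 * a)) :=
          (Measure.map_apply ((hW.meas _).sub (hW.meas _)) measurableSet_Icc).symm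
      _ = gaussianReal 0 (Real.toNNReal (ts ((i : ℕ) + 1) - ts (i : ℕ)))
            (Icc (-(2 * a)) (2 * a)) := by rw [hmap]
      _ ≤ ENNReal.ofReal (2 * (2 * a) / Real.sqrt (2 * Real.pi * g)) :=
          gauss_strip _ g (2 * a) hg hco (by linarith)
      _ = Q := by rw [hQdef]; congr 1; ring
  calc μ (⋂ i ∈ Finset.range (K + 2), {ω | |W (τ i) ω| ≤ a})
      ≤ μ (⋂ i ∈ s, η i ⁻¹' Icc (-(2 * a)) (2 * a)) := measure_mono hincl
    _ = ∏ i ∈ s, μ (η i ⁻¹' Icc (-(2 * a)) (2 * a)) :=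
        hind.measure_inter_preimage_eq_mul s (fun i _ => measurableSet_Icc)
    _ ≤ ∏ _i ∈ s, Q := Finset.prod_le_prod' hfactor
    _ = Q ^ (K + 2 - 1) := by
        rw [Finset.prod_const]
        congr 1
        rw [hs, Finset.card_erase_of_mem (Finset.mem_univ _), Finset.card_univ]
        simp

/-- Indicator that `|W s ω| ≤ a`, as an `ℝ≥0∞`-valued function. -/
noncomputable def ind (W : ℝ → Ω → ℝ) (a : ℝ) (s : ℝ) (ω : Ω) : ℝ≥0∞ :=
  if |W s ω| ≤ a then 1 else 0

lemma measurable_ind_uncurry (hWj : Measurable (Function.uncurry W)) (a : ℝ) :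
    Measurable (fun p : Ω × ℝ => ind W a p.2 p.1) := by
  have hm : Measurable fun p : Ω × ℝ => W p.2 p.1 := hWj.comp measurable_swap
  have hset : MeasurableSet {p : Ω × ℝ | |W p.2 p.1| ≤ a} := by
    have : {p : Ω × ℝ | |W p.2 p.1| ≤ a} = (fun p : Ω × ℝ => W p.2 p.1) ⁻¹' Icc (-a) a := by
      ext p; simp [abs_le]
    rw [this]
    exact hm measurableSet_Icc
  exact Measurable.ite hset measurable_const measurable_const

lemma measurable_ind_left (hWj : Measurable (Function.uncurry W)) (a : ℝ) (t : ℝ) :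
    Measurable (fun ω : Ω => ind W a t ω) :=
  (measurable_ind_uncurry hWj a).comp (measurable_id.prodMk measurable_const)

lemma measurable_ind_right (hWj : Measurable (Function.uncurry W)) (a : ℝ) (ω : Ω) :
    Measurable (fun t : ℝ => ind W a t ω) :=
  (measurable_ind_uncurry hWj a).comp (measurable_const.prodMk measurable_id)

lemma ind_le_one (W : ℝ → Ω → ℝ) (a s : ℝ) (ω : Ω) : ind W a s ω ≤ 1 := by
  rw [ind]; split <;> simp

/-- occupation time of the `i`-th block `[iD, iD + 3D/4]`. -/
noncomputable def occ (W : ℝ → Ω → ℝ) (a D : ℝ) (i : ℕ) (ω : Ω) : ℝ≥0∞ :=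
  ∫⁻ s in Icc ((i : ℝ) * D) ((i : ℝ) * D + 3 * D / 4), ind W a s ω

lemma measurable_occ (hWj : Measurable (Function.uncurry W)) (a D : ℝ) (i : ℕ) :
    Measurable (occ W a D i) :=
  Measurable.lintegral_prod_right' (measurable_ind_uncurry hWj a)

lemma occ_le (W : ℝ → Ω → ℝ) {a D : ℝ} (hD : 0 < D) (i : ℕ) (ω : Ω) :
    occ W a D i ω ≤ ENNReal.ofReal (3 * D / 4) := by
  calc occ W a D i ω ≤ ∫⁻ _ in Icc ((i : ℝ) * D) ((i : ℝ) * D + 3 * D / 4), 1 :=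
        lintegral_mono fun s => ind_le_one W a s ω
    _ = volume (Icc ((i : ℝ) * D) ((i : ℝ) * D + 3 * D / 4)) := setLIntegral_one _
    _ = ENNReal.ofReal (3 * D / 4) := by rw [Real.volume_Icc]; congr 1; ring


lemma occ_prod_bound (hW : IsStdBrownianMotion μ W) (hWj : Measurable (Function.uncurry W))
    {a D : ℝ} (ha : 0 ≤ a) (hD : 0 < D) (S : Finset ℕ) :
    ∀ (k : ℕ) (τ : ℕ → ℝ), (0 < k → 0 ≤ τ 0) →
    (∀ i, i + 1 < k → τ i + D / 4 ≤ τ (i + 1)) →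
    (∀ b ∈ S, 0 < k → (b : ℝ) * D + D ≤ τ 0) →
    ∫⁻ ω, (∏ b ∈ S, occ W a D b ω) * ∏ i ∈ Finset.range k, ind W a (τ i) ω ∂μ
      ≤ ENNReal.ofReal (3 * D / 4) ^ S.card
        * ENNReal.ofReal (4 * a / Real.sqrt (2 * Real.pi * (D / 4))) ^ (S.card + k - 1) := by
  haveI := hW.isProb
  induction S using Finset.induction_on_max with
  | empty =>
    intro k τ hτ0 hτ hSτ
    simp only [Finset.prod_empty, one_mul, Finset.card_empty, pow_zero, Nat.zero_add]
    have hE : MeasurableSet (⋂ i ∈ Finset.range k, {ω : Ω | |W (τ i) ω| ≤ a}) := by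
      apply Finset.measurableSet_biInter
      intro i _
      have : {ω : Ω | |W (τ i) ω| ≤ a} = W (τ i) ⁻¹' Icc (-a) a := by ext ω; simp [abs_le]
      rw [this]
      exact hW.meas _ measurableSet_Icc
    have hconv : ∀ ω, (∏ i ∈ Finset.range k, ind W a (τ i) ω)
        = (⋂ i ∈ Finset.range k, {ω' : Ω | |W (τ i) ω'| ≤ a}).indicator 1 ω := by
      intro ω
      unfold ind
      rw [Finset.prod_boole]
      by_cases h : ∀ i ∈ Finset.range k, |W (τ i) ω| ≤ a
      · have hmem : ω ∈ ⋂ i ∈ Finset.range k, {ω' : Ω | |W (τ i) ω'| ≤ a} := by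
          simp only [Set.mem_iInter, Set.mem_setOf_eq]
          exact h
        rw [if_pos h, Set.indicator_of_mem hmem]
        rfl
      · have hmem : ω ∉ ⋂ i ∈ Finset.range k, {ω' : Ω | |W (τ i) ω'| ≤ a} := by
          intro hc
          simp only [Set.mem_iInter, Set.mem_setOf_eq] at hc
          exact h hc
        rw [if_neg h, Set.indicator_of_notMem hmem]
    rw [lintegral_congr hconv, lintegral_indicator_one hE]
    exact chain_bound hW ha (by positivity) k τ hτ0 hτ
  | insert b₀ S hlt IH =>
    intro k τ hτ0 hτ hSτ
    have hb₀S : b₀ ∉ S := fun h => absurd (hlt _ h) (lt_irrefl _)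
    set I : Set ℝ := Icc ((b₀ : ℝ) * D) ((b₀ : ℝ) * D + 3 * D / 4) with hI
    set F : Ω → ℝ≥0∞ := fun ω =>
      (∏ b ∈ S, occ W a D b ω) * ∏ i ∈ Finset.range k, ind W a (τ i) ω with hF
    have hFmeas : Measurable F := by
      apply Measurable.mul
      · exact Finset.measurable_prod _ fun b _ => measurable_occ hWj a D b
      · exact Finset.measurable_prod _ fun i _ => measurable_ind_left hWj a (τ i)
    have key : ∀ ω, (∏ b ∈ insert b₀ S, occ W a D b ω) * ∏ i ∈ Finset.range k, ind W a (τ i) ω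
        = ∫⁻ s in I, ind W a s ω * F ω := by
      intro ω
      rw [Finset.prod_insert hb₀S, mul_assoc]
      rw [lintegral_mul_const _ (measurable_ind_right hWj a ω)]
      rfl
    rw [lintegral_congr key]
    have hswap : ∫⁻ ω, (∫⁻ s in I, ind W a s ω * F ω) ∂μ
        = ∫⁻ s in I, (∫⁻ ω, ind W a s ω * F ω ∂μ) := by
      apply lintegral_lintegral_swap
      exact ((measurable_ind_uncurry hWj a).mul (hFmeas.comp measurable_fst)).aemeasurable
    rw [hswap]
    have hinner : ∀ s ∈ I, (∫⁻ ω, ind W a s ω * F ω ∂μ)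
        ≤ ENNReal.ofReal (3 * D / 4) ^ S.card
          * ENNReal.ofReal (4 * a / Real.sqrt (2 * Real.pi * (D / 4))) ^ (S.card + k) := by
      intro s hs
      obtain ⟨hs1, hs2⟩ := hs
      set τ' : ℕ → ℝ := fun i => if i = 0 then s else τ (i - 1) with hτ'
      have heq : ∀ ω, ind W a s ω * F ω
          = (∏ b ∈ S, occ W a D b ω) * ∏ i ∈ Finset.range (k + 1), ind W a (τ' i) ω := by
        intro ω
        rw [Finset.prod_range_succ']
        simp only [hτ', Nat.add_sub_cancel, if_neg (Nat.succ_ne_zero _), if_pos rfl]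
        rw [hF]
        ring
      rw [lintegral_congr heq]
      have hb₀0 : (0 : ℝ) ≤ (b₀ : ℝ) * D := by positivity
      have hres := IH (k + 1) τ'
        (fun _ => by simpa [hτ'] using le_trans hb₀0 hs1)
        (by
          intro i hi
          rcases i with _ | p
          · have hk : 0 < k := by omega
            have h2 := hSτ b₀ (Finset.mem_insert_self _ _) hk
            have e1 : τ' 0 = s := by simp [hτ']
            have e2 : τ' (0 + 1) = τ 0 := by simp [hτ']
            rw [e1, e2]
            linarith
          · simp only [hτ', if_neg (Nat.succ_ne_zero p), if_neg (Nat.succ_ne_zero (p + 1)),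
              Nat.add_sub_cancel]
            exact hτ p (by omega))
        (by
          intro b hb _
          have hblt : b < b₀ := hlt b hb
          have hcast : ((b : ℝ) + 1) ≤ (b₀ : ℝ) := by exact_mod_cast hblt
          have : (b : ℝ) * D + D ≤ (b₀ : ℝ) * D := by nlinarith
          simp only [hτ', if_pos rfl]
          linarith)
      calc ∫⁻ ω, (∏ b ∈ S, occ W a D b ω) * ∏ i ∈ Finset.range (k + 1), ind W a (τ' i) ω ∂μ
          ≤ ENNReal.ofReal (3 * D / 4) ^ S.card
            * ENNReal.ofReal (4 * a / Real.sqrt (2 * Real.pi * (D / 4))) ^ (S.card + (k + 1) - 1) :=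
            hres
        _ = _ := by rw [show S.card + (k + 1) - 1 = S.card + k from by omega]
    calc ∫⁻ s in I, (∫⁻ ω, ind W a s ω * F ω ∂μ)
        ≤ ∫⁻ _ in I, (ENNReal.ofReal (3 * D / 4) ^ S.card
            * ENNReal.ofReal (4 * a / Real.sqrt (2 * Real.pi * (D / 4))) ^ (S.card + k)) :=
          setLIntegral_mono' measurableSet_Icc hinner
      _ = (ENNReal.ofReal (3 * D / 4) ^ S.card
            * ENNReal.ofReal (4 * a / Real.sqrt (2 * Real.pi * (D / 4))) ^ (S.card + k))
            * volume I := setLIntegral_const _ _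
      _ = ENNReal.ofReal (3 * D / 4) ^ (insert b₀ S).card
            * ENNReal.ofReal (4 * a / Real.sqrt (2 * Real.pi * (D / 4)))
              ^ ((insert b₀ S).card + k - 1) := by
          rw [hI, Real.volume_Icc, Finset.card_insert_of_notMem hb₀S]
          have h1 : (b₀ : ℝ) * D + 3 * D / 4 - (b₀ : ℝ) * D = 3 * D / 4 := by ring
          rw [h1]
          have h2 : S.card + 1 + k - 1 = S.card + k := by omega
          rw [h2, pow_succ]
          ring


lemma exists_modification (hB : IsStdBrownianMotion μ B) :
    ∃ (W : ℝ → Ω → ℝ) (N : Set Ω), IsStdBrownianMotion μ W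
      ∧ Measurable (Function.uncurry W) ∧ μ N = 0 ∧ ∀ ω ∉ N, ∀ t, W t ω = B t ω := by
  classical
  haveI := hB.isProb
  set N := toMeasurable μ {ω | ¬ Continuous fun t => B t ω} with hNdef
  have hNm : MeasurableSet N := measurableSet_toMeasurable _ _
  have hN0 : μ N = 0 := by
    rw [hNdef, measure_toMeasurable]
    exact hB.cont
  set W : ℝ → Ω → ℝ := fun t ω => if ω ∈ N then 0 else B t ω with hWdef
  have hmeas : ∀ t, Measurable (W t) := fun t =>
    Measurable.ite hNm measurable_const (hB.meas t)
  have hcont : ∀ ω, Continuous fun t => W t ω := by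
    intro ω
    by_cases h : ω ∈ N
    · simp only [hWdef, if_pos h]
      exact continuous_const
    · simp only [hWdef, if_neg h]
      by_contra hc
      exact h (subset_toMeasurable _ _ hc)
  have haeN : ∀ᵐ ω ∂μ, ω ∉ N := by
    rw [ae_iff]
    simpa using hN0
  have haeeq : ∀ t, W t =ᵐ[μ] B t := by
    intro t
    filter_upwards [haeN] with ω h
    simp [hWdef, if_neg h]
  refine ⟨W, N, ⟨hB.isProb, hmeas, ?_, ae_of_all _ hcont, ?_, ?_⟩,
    measurable_uncurry_of_continuous_of_measurable hcont hmeas, hN0,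
    fun ω hω t => by simp [hWdef, if_neg hω]⟩
  · filter_upwards [haeeq 0, hB.start] with ω h1 h2
    rw [h1, h2]
  · intro s t hs hst
    rw [← hB.incr s t hs hst]
    apply Measure.map_congr
    filter_upwards [haeeq s, haeeq t] with ω h1 h2
    rw [h1, h2]
  · intro n ts h1 h2
    have hBind := hB.indep n ts h1 h2
    rw [iIndepFun_iff_measure_inter_preimage_eq_mul] at hBind ⊢
    intro S sets hsets
    have hae : ∀ᵐ ω ∂μ, ∀ i : Fin n, W (ts (i + 1)) ω - W (ts i) ω
        = B (ts (i + 1)) ω - B (ts i) ω := by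
      filter_upwards [haeN] with ω h i
      simp [hWdef, if_neg h]
    have h1' : μ (⋂ i ∈ S, (fun ω => W (ts (i + 1)) ω - W (ts i) ω) ⁻¹' sets i)
        = μ (⋂ i ∈ S, (fun ω => B (ts (i + 1)) ω - B (ts i) ω) ⁻¹' sets i) := by
      apply measure_congr
      rw [Filter.eventuallyEq_set]
      filter_upwards [hae] with ω h
      simp only [Set.mem_iInter, Set.mem_preimage]
      constructor
      · intro hx i hi; rw [← h i]; exact hx i hi
      · intro hx i hi; rw [h i]; exact hx i hi
    have h2' : ∀ i : Fin n, μ ((fun ω => W (ts (i + 1)) ω - W (ts i) ω) ⁻¹' sets i)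
        = μ ((fun ω => B (ts (i + 1)) ω - B (ts i) ω) ⁻¹' sets i) := by
      intro i
      apply measure_congr
      rw [Filter.eventuallyEq_set]
      filter_upwards [hae] with ω h
      simp only [Set.mem_preimage]
      rw [h i]
    rw [h1', hBind S hsets]
    exact Finset.prod_congr rfl fun i _ => (h2' i).symm


/-- the indicator integral computes occupation volume -/
lemma ind_setLIntegral (hWj : Measurable (Function.uncurry W)) (a : ℝ) (ω : Ω)
    (I : Set ℝ) (hI : MeasurableSet I)
    (hAm : MeasurableSet {s : ℝ | |W s ω| ≤ a}) :
    ∫⁻ s in I, ind W a s ω = volume ({s : ℝ | |W s ω| ≤ a} ∩ I) := by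
  have h1 : (fun s => ind W a s ω) = ({s : ℝ | |W s ω| ≤ a}).indicator 1 := by
    funext s
    rw [ind, Set.indicator_apply]
    simp [Set.mem_setOf_eq]
  rw [h1, lintegral_indicator_one hAm, Measure.restrict_apply hAm]

lemma measurableSet_abs_le (hWj : Measurable (Function.uncurry W)) (a : ℝ) (ω : Ω) :
    MeasurableSet {s : ℝ | |W s ω| ≤ a} := by
  have hm : Measurable fun s : ℝ => W s ω :=
    hWj.comp (measurable_id.prodMk measurable_const)
  have : {s : ℝ | |W s ω| ≤ a} = (fun s : ℝ => W s ω) ⁻¹' Icc (-a) a := by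
    ext s; simp [abs_le]
  rw [this]
  exact hm measurableSet_Icc


lemma main_est (hW : IsStdBrownianMotion μ W) (hWj : Measurable (Function.uncurry W))
    (T : ℝ) (hT : 1 ≤ T) :
    μ {ω | ENNReal.ofReal (T / 2) ≤
        volume {s ∈ Icc (0:ℝ) T | |W s ω| ≤ Real.exp (-8) / 4 * T ^ ((1:ℝ)/3)}}
      ≤ ENNReal.ofReal (Real.exp (-(1/24) * T ^ ((1:ℝ)/3))) := by
  classical
  haveI := hW.isProb
  have hT0 : (0:ℝ) < T := by linarith
  set x : ℝ := T ^ ((1:ℝ)/3) with hxdef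
  have hx1 : 1 ≤ x := Real.one_le_rpow hT (by norm_num)
  have hx0 : (0:ℝ) < x := by linarith
  set a : ℝ := Real.exp (-8) / 4 * x with hadef
  have hexp8 : (0:ℝ) < Real.exp (-8) := Real.exp_pos _
  have hexp8le : Real.exp (-8) ≤ 1 := Real.exp_le_one_iff.2 (by norm_num)
  have ha0 : 0 ≤ a := by positivity
  have hax : a ≤ x := by
    rw [hadef]
    nlinarith
  have hx3 : x ^ (3:ℕ) = T := by
    rw [hxdef, ← Real.rpow_natCast (T ^ ((1:ℝ)/3)) 3, ← Real.rpow_mul hT0.le]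
    norm_num
  have hxs : x ≤ Real.sqrt T := by
    rw [Real.sqrt_eq_rpow, hxdef]
    exact Real.rpow_le_rpow_of_exponent_le hT (by norm_num)
  have hsep : ∀ ω, {s ∈ Icc (0:ℝ) T | |W s ω| ≤ a}
      = {s : ℝ | |W s ω| ≤ a} ∩ Icc (0:ℝ) T := by
    intro ω; ext s; simp [Set.mem_setOf_eq, and_comm]
  by_cases hxc : x ≤ 168
  · -- small T regime : first moment bound
    set Y : Ω → ℝ≥0∞ := fun ω => ∫⁻ s in Icc (T/4) T, ind W a s ω with hYdef
    have hYm : Measurable Y := Measurable.lintegral_prod_right' (measurable_ind_uncurry hWj a)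
    have hT4 : (0:ℝ) < T/4 := by linarith
    have step1 : {ω | ENNReal.ofReal (T / 2) ≤ volume {s ∈ Icc (0:ℝ) T | |W s ω| ≤ a}}
        ⊆ {ω | ENNReal.ofReal (T/4) ≤ Y ω} := by
      intro ω hω
      simp only [Set.mem_setOf_eq] at hω ⊢
      rw [hsep ω] at hω
      have hsub : {s : ℝ | |W s ω| ≤ a} ∩ Icc (0:ℝ) T
          ⊆ Icc (0:ℝ) (T/4) ∪ ({s : ℝ | |W s ω| ≤ a} ∩ Icc (T/4) T) := by
        rintro s ⟨h1, h2, h3⟩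
        rcases le_total s (T/4) with h | h
        · exact Or.inl ⟨h2, h⟩
        · exact Or.inr ⟨h1, h, h3⟩
      have h4 : volume ({s : ℝ | |W s ω| ≤ a} ∩ Icc (0:ℝ) T)
          ≤ ENNReal.ofReal (T/4) + Y ω := by
        refine (measure_mono hsub).trans ((measure_union_le _ _).trans ?_)
        rw [Real.volume_Icc, sub_zero]
        have hYeq : Y ω = volume ({s : ℝ | |W s ω| ≤ a} ∩ Icc (T/4) T) :=
          ind_setLIntegral hWj a ω _ measurableSet_Icc (measurableSet_abs_le hWj a ω)
        rw [hYeq]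
      have h5 : ENNReal.ofReal (T/4) + ENNReal.ofReal (T/4) ≤ ENNReal.ofReal (T/4) + Y ω := by
        rw [← ENNReal.ofReal_add (by linarith) (by linarith)]
        calc ENNReal.ofReal (T/4 + T/4) = ENNReal.ofReal (T/2) := by congr 1; ring
          _ ≤ _ := le_trans hω h4
      exact (ENNReal.add_le_add_iff_left ENNReal.ofReal_ne_top).1 h5
    have step4 : ∀ s ∈ Icc (T/4) T, (∫⁻ ω, ind W a s ω ∂μ)
        ≤ ENNReal.ofReal (Real.exp (-8) / 2) := by
      intro s hs
      obtain ⟨hs1, hs2⟩ := hs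
      have hs0 : (0:ℝ) < s := lt_of_lt_of_le hT4 hs1
      have hWsm : MeasurableSet {ω | |W s ω| ≤ a} := by
        have : {ω : Ω | |W s ω| ≤ a} = W s ⁻¹' Icc (-a) a := by ext ω; simp [abs_le]
        rw [this]; exact hW.meas _ measurableSet_Icc
      have h1 : (∫⁻ ω, ind W a s ω ∂μ) = μ {ω | |W s ω| ≤ a} := by
        have h2 : (fun ω => ind W a s ω) = ({ω : Ω | |W s ω| ≤ a}).indicator 1 := by
          funext ω
          rw [ind, Set.indicator_apply]
          simp [Set.mem_setOf_eq]
        rw [h2, lintegral_indicator_one hWsm]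
      rw [h1]
      have h3 : μ {ω | |W s ω| ≤ a}
          = μ ((fun ω => W s ω - W 0 ω) ⁻¹' Icc (-a) a) := by
        apply measure_congr
        rw [Filter.eventuallyEq_set]
        filter_upwards [hW.start] with ω h0
        simp [Set.mem_setOf_eq, h0, abs_le]
      rw [h3, ← Measure.map_apply (f := fun ω => W s ω - W 0 ω) ((hW.meas s).sub (hW.meas 0)) measurableSet_Icc,
        hW.incr 0 s le_rfl hs0.le]
      calc gaussianReal 0 (Real.toNNReal (s - 0)) (Icc (-a) a)
          ≤ ENNReal.ofReal (2 * a / Real.sqrt (2 * Real.pi * (T/4))) := by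
            apply gauss_strip _ (T/4) a hT4 _ ha0
            rw [Real.coe_toNNReal _ (by linarith)]
            linarith
        _ ≤ ENNReal.ofReal (Real.exp (-8) / 2) := by
            apply ENNReal.ofReal_le_ofReal
            have hsT : (0:ℝ) < Real.sqrt T := Real.sqrt_pos.2 hT0
            have hsq : Real.sqrt T ≤ Real.sqrt (2 * Real.pi * (T/4)) := by
              apply Real.sqrt_le_sqrt
              nlinarith [Real.pi_gt_three]
            calc 2 * a / Real.sqrt (2 * Real.pi * (T/4)) ≤ 2 * a / Real.sqrt T := by
                  apply div_le_div_of_nonneg_left (by linarith) hsT hsq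
              _ ≤ Real.exp (-8) / 2 := by
                  rw [div_le_iff₀ hsT]
                  have : 2 * a = Real.exp (-8) / 2 * x := by rw [hadef]; ring
                  rw [this]
                  apply mul_le_mul_of_nonneg_left hxs (by positivity)
    have step5 : (∫⁻ ω, Y ω ∂μ)
        ≤ ENNReal.ofReal (Real.exp (-8) / 2) * ENNReal.ofReal (T - T/4) := by
      have hswap : (∫⁻ ω, Y ω ∂μ) = ∫⁻ s in Icc (T/4) T, (∫⁻ ω, ind W a s ω ∂μ) := by
        rw [hYdef]
        apply lintegral_lintegral_swap
        exact (measurable_ind_uncurry hWj a).aemeasurable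
      rw [hswap]
      calc ∫⁻ s in Icc (T/4) T, (∫⁻ ω, ind W a s ω ∂μ)
          ≤ ∫⁻ _ in Icc (T/4) T, ENNReal.ofReal (Real.exp (-8) / 2) :=
            setLIntegral_mono' measurableSet_Icc step4
        _ = ENNReal.ofReal (Real.exp (-8) / 2) * volume (Icc (T/4) T) := setLIntegral_const _ _
        _ = _ := by rw [Real.volume_Icc]
    calc μ {ω | ENNReal.ofReal (T / 2) ≤ volume {s ∈ Icc (0:ℝ) T | |W s ω| ≤ a}}
        ≤ μ {ω | ENNReal.ofReal (T/4) ≤ Y ω} := measure_mono step1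
      _ ≤ (∫⁻ ω, Y ω ∂μ) / ENNReal.ofReal (T/4) :=
          meas_ge_le_lintegral_div hYm.aemeasurable
            (by simp [ENNReal.ofReal_eq_zero]; linarith) ENNReal.ofReal_ne_top
      _ ≤ ENNReal.ofReal (Real.exp (-(1/24) * x)) := by
          rw [ENNReal.div_le_iff (by simp [ENNReal.ofReal_eq_zero]; linarith)
            ENNReal.ofReal_ne_top]
          refine step5.trans ?_
          rw [← ENNReal.ofReal_mul (by positivity), ← ENNReal.ofReal_mul (Real.exp_pos _).le]
          apply ENNReal.ofReal_le_ofReal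
          have hkey : (3/2 : ℝ) * Real.exp (-8) ≤ Real.exp (-(1/24) * x) := by
            have h1 : Real.exp (-(7:ℝ)) = Real.exp 1 * Real.exp (-8) := by
              rw [← Real.exp_add]; norm_num
            have h2 : Real.exp (-(7:ℝ)) ≤ Real.exp (-(1/24) * x) := by
              apply Real.exp_le_exp.2
              linarith
            have h3 : (3/2:ℝ) ≤ Real.exp 1 := by
              have := Real.exp_one_gt_d9
              linarith
            nlinarith
          nlinarith [Real.exp_pos (-(1/24) * x), hT0]
  · push_neg at hxc
    set n : ℕ := ⌈x⌉₊ with hndef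
    have hn0 : 0 < n := Nat.ceil_pos.2 hx0
    have hnx : x ≤ (n:ℝ) := Nat.le_ceil x
    have hn0' : (0:ℝ) < n := by exact_mod_cast hn0
    have hxn : (n:ℝ) ≤ 2*x := by
      have h1 : (n:ℝ) < x + 1 := Nat.ceil_lt_add_one hx0.le
      linarith
    set D : ℝ := T / n with hDdef
    have hD0 : 0 < D := div_pos hT0 hn0'
    have hnD : (n:ℝ) * D = T := by rw [hDdef]; field_simp
    have hDx : x*x/2 ≤ D := by
      rw [hDdef, le_div_iff₀ hn0']
      calc x*x/2*(n:ℝ) ≤ x*x/2*(2*x) := by nlinarith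
        _ = x^(3:ℕ) := by ring
        _ = T := hx3
    set m : ℕ := ⌈(n:ℝ)/6⌉₊ with hmdef
    have hm1 : 1 ≤ m := Nat.ceil_pos.2 (by positivity)
    have hnm : (n:ℝ) ≤ 6*m := by
      have hm' : ((n:ℝ)/6) ≤ (m:ℝ) := Nat.le_ceil _
      linarith
    have hmn : m ≤ n := Nat.ceil_le.2 (by
      calc (n:ℝ)/6 ≤ (n:ℝ)/1 := by gcongr <;> norm_num
        _ = (n:ℝ) := by norm_num)
    have hmx : x/6 ≤ (m:ℝ) := by
      have hm' : ((n:ℝ)/6) ≤ (m:ℝ) := Nat.le_ceil _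
      linarith
    set Q := ENNReal.ofReal (4*a/Real.sqrt (2*Real.pi*(D/4))) with hQdef
    have hQle : Q ≤ ENNReal.ofReal (2*Real.exp (-8)) := by
      rw [hQdef]
      apply ENNReal.ofReal_le_ofReal
      have h1 : x/2 ≤ Real.sqrt (2*Real.pi*(D/4)) := by
        have h2 : (x/2)^2 ≤ 2*Real.pi*(D/4) := by nlinarith [Real.pi_gt_three]
        calc x/2 = Real.sqrt ((x/2)^2) := (Real.sqrt_sq (by positivity)).symm
          _ ≤ _ := Real.sqrt_le_sqrt h2
      have hx2 : (0:ℝ) < x/2 := by linarith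
      rw [div_le_iff₀ (lt_of_lt_of_le hx2 h1)]
      calc 4*a = 2*Real.exp (-8)*(x/2) := by rw [hadef]; ring
        _ ≤ 2*Real.exp (-8)*Real.sqrt (2*Real.pi*(D/4)) :=
            mul_le_mul_of_nonneg_left h1 (by positivity)
    set A : ℕ → Set Ω := fun i => {ω | ENNReal.ofReal (D/8) ≤ occ W a D i ω} with hAdef
    have hAm : ∀ i, MeasurableSet (A i) := fun i =>
      measurableSet_le measurable_const (measurable_occ hWj a D i)
    have hcover : Icc (0:ℝ) T ⊆ ⋃ i ∈ Finset.range n, Icc ((i:ℝ)*D) ((i:ℝ)*D + D) := by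
      rintro s ⟨hs0, hsT⟩
      have hsD : (0:ℝ) ≤ s/D := by positivity
      set i : ℕ := min ⌊s/D⌋₊ (n-1) with hidef
      have hin : i < n := lt_of_le_of_lt (min_le_right _ _) (by omega)
      refine Set.mem_biUnion (Finset.mem_range.2 hin) ⟨?_, ?_⟩
      · have h1 : (i:ℝ) ≤ (⌊s/D⌋₊:ℝ) := by exact_mod_cast min_le_left _ _
        have h2 : (⌊s/D⌋₊:ℝ) ≤ s/D := Nat.floor_le hsD
        have h3 : (i:ℝ) ≤ s/D := le_trans h1 h2
        calc (i:ℝ)*D ≤ (s/D)*D := mul_le_mul_of_nonneg_right h3 hD0.le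
          _ = s := by field_simp
      · rcases le_or_gt (⌊s/D⌋₊) (n-1) with h | h
        · have hieq : i = ⌊s/D⌋₊ := min_eq_left h
          have h4 : s/D < (i:ℝ) + 1 := by
            rw [hieq]
            exact_mod_cast Nat.lt_floor_add_one (s/D)
          have h5 : s < ((i:ℝ)+1)*D := by
            calc s = (s/D)*D := by field_simp
              _ < ((i:ℝ)+1)*D := mul_lt_mul_of_pos_right h4 hD0
          linarith
        · have hieq : i = n-1 := min_eq_right (le_of_lt h)
          have hcast : ((i:ℕ):ℝ) = (n:ℝ) - 1 := by
            rw [hieq]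
            push_cast [Nat.cast_sub hn0]
            ring
          rw [hcast]
          have h6 : ((n:ℝ) - 1)*D + D = T := by rw [← hnD]; ring
          linarith
    have hkey : ∀ ω, ENNReal.ofReal (T / 2) ≤ volume ({s : ℝ | |W s ω| ≤ a} ∩ Icc (0:ℝ) T) →
        ∃ S ∈ Finset.powersetCard m (Finset.range n), ω ∈ ⋂ i ∈ S, A i := by
      intro ω hω
      have hAsm := measurableSet_abs_le hWj a ω
      have h1 : volume ({s : ℝ | |W s ω| ≤ a} ∩ Icc (0:ℝ) T)
          ≤ ∑ i ∈ Finset.range n, (occ W a D i ω + ENNReal.ofReal (D/4)) := by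
        have hsub : {s : ℝ | |W s ω| ≤ a} ∩ Icc (0:ℝ) T
            ⊆ ⋃ i ∈ Finset.range n,
              (({s : ℝ | |W s ω| ≤ a} ∩ Icc ((i:ℝ)*D) ((i:ℝ)*D + 3*D/4))
                ∪ Icc ((i:ℝ)*D + 3*D/4) ((i:ℝ)*D + D)) := by
          rintro s ⟨hmem, hIcc⟩
          have := hcover hIcc
          simp only [Set.mem_iUnion, exists_prop] at this
          obtain ⟨i, hi, hsi⟩ := this
          refine Set.mem_biUnion hi ?_
          rcases le_or_gt s ((i:ℝ)*D + 3*D/4) with hle | hgt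
          · exact Or.inl ⟨hmem, hsi.1, hle⟩
          · exact Or.inr ⟨le_of_lt hgt, hsi.2⟩
        calc volume ({s : ℝ | |W s ω| ≤ a} ∩ Icc (0:ℝ) T)
            ≤ volume (⋃ i ∈ Finset.range n,
              (({s : ℝ | |W s ω| ≤ a} ∩ Icc ((i:ℝ)*D) ((i:ℝ)*D + 3*D/4))
                ∪ Icc ((i:ℝ)*D + 3*D/4) ((i:ℝ)*D + D))) := measure_mono hsub
          _ ≤ ∑ i ∈ Finset.range n, volume
              (({s : ℝ | |W s ω| ≤ a} ∩ Icc ((i:ℝ)*D) ((i:ℝ)*D + 3*D/4))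
                ∪ Icc ((i:ℝ)*D + 3*D/4) ((i:ℝ)*D + D)) := measure_biUnion_finset_le _ _
          _ ≤ ∑ i ∈ Finset.range n, (occ W a D i ω + ENNReal.ofReal (D/4)) := by
              apply Finset.sum_le_sum
              intro i _
              refine (measure_union_le _ _).trans ?_
              have e1 : volume ({s : ℝ | |W s ω| ≤ a} ∩ Icc ((i:ℝ)*D) ((i:ℝ)*D + 3*D/4))
                  = occ W a D i ω :=
                (ind_setLIntegral hWj a ω _ measurableSet_Icc hAsm).symm
              have e2 : volume (Icc ((i:ℝ)*D + 3*D/4) ((i:ℝ)*D + D)) = ENNReal.ofReal (D/4) := by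
                rw [Real.volume_Icc]; congr 1; ring
              rw [e1, e2]
      have hq8 : (0:ℝ) < D/8 := by linarith
      have hsum : (n:ℝ≥0∞)*ENNReal.ofReal (D/8) + (n:ℝ≥0∞)*ENNReal.ofReal (D/8)
          ≤ ∑ i ∈ Finset.range n, occ W a D i ω := by
        have h2 := le_trans hω h1
        rw [Finset.sum_add_distrib, Finset.sum_const, Finset.card_range, nsmul_eq_mul] at h2
        have hnc : ∀ r : ℝ, 0 ≤ r → (n:ℝ≥0∞)*ENNReal.ofReal r = ENNReal.ofReal ((n:ℝ)*r) := by
          intro r hr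
          rw [ENNReal.ofReal_mul (by positivity), ENNReal.ofReal_natCast]
        have hT2 : ENNReal.ofReal (T/2)
            = (n:ℝ≥0∞)*ENNReal.ofReal (D/8) + (n:ℝ≥0∞)*ENNReal.ofReal (D/8)
              + (n:ℝ≥0∞)*ENNReal.ofReal (D/4) := by
          rw [hnc _ (by linarith), hnc _ (by linarith),
            ← ENNReal.ofReal_add (by positivity) (by positivity),
            ← ENNReal.ofReal_add (by positivity) (by positivity)]
          congr 1
          rw [← hnD]; ring
        rw [hT2] at h2
        exact (ENNReal.add_le_add_iff_right
          (ENNReal.mul_ne_top (ENNReal.natCast_ne_top n) ENNReal.ofReal_ne_top)).1 h2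
      set G := (Finset.range n).filter (fun i => ENNReal.ofReal (D/8) ≤ occ W a D i ω) with hGdef
      have h3 : ∑ i ∈ Finset.range n, occ W a D i ω
          ≤ (G.card : ℝ≥0∞) * ENNReal.ofReal (3*D/4) + (n:ℝ≥0∞)*ENNReal.ofReal (D/8) := by
        rw [← Finset.sum_filter_add_sum_filter_not (Finset.range n)
          (fun i => ENNReal.ofReal (D/8) ≤ occ W a D i ω)]
        apply add_le_add
        · calc ∑ i ∈ G, occ W a D i ω ≤ ∑ _i ∈ G, ENNReal.ofReal (3*D/4) :=
              Finset.sum_le_sum fun i _ => occ_le W hD0 i ω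
            _ = (G.card : ℝ≥0∞) * ENNReal.ofReal (3*D/4) := by
              rw [Finset.sum_const, nsmul_eq_mul]
        · calc ∑ i ∈ (Finset.range n).filter
                (fun i => ¬ ENNReal.ofReal (D/8) ≤ occ W a D i ω), occ W a D i ω
              ≤ ∑ _i ∈ (Finset.range n).filter
                (fun i => ¬ ENNReal.ofReal (D/8) ≤ occ W a D i ω), ENNReal.ofReal (D/8) := by
                apply Finset.sum_le_sum
                intro i hi
                exact le_of_lt (lt_of_not_ge (Finset.mem_filter.1 hi).2)
            _ = (((Finset.range n).filter
                (fun i => ¬ ENNReal.ofReal (D/8) ≤ occ W a D i ω)).card : ℝ≥0∞)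
                  * ENNReal.ofReal (D/8) := by rw [Finset.sum_const, nsmul_eq_mul]
            _ ≤ (n:ℝ≥0∞)*ENNReal.ofReal (D/8) := by
                apply mul_le_mul_left
                have := Finset.card_filter_le (Finset.range n)
                  (fun i => ¬ ENNReal.ofReal (D/8) ≤ occ W a D i ω)
                rw [Finset.card_range] at this
                exact_mod_cast this
      have h4 : (n:ℝ≥0∞)*ENNReal.ofReal (D/8) ≤ (G.card : ℝ≥0∞) * ENNReal.ofReal (3*D/4) :=
        (ENNReal.add_le_add_iff_right
          (ENNReal.mul_ne_top (ENNReal.natCast_ne_top n) ENNReal.ofReal_ne_top)).1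
          (hsum.trans h3)
      have h6 : ENNReal.ofReal (3*D/4) = 6 * ENNReal.ofReal (D/8) := by
        rw [show ((6:ℝ≥0∞)) = ENNReal.ofReal 6 from by simp,
          ← ENNReal.ofReal_mul (by norm_num)]
        congr 1
        ring
      rw [h6, ← mul_assoc] at h4
      have h7 : (n:ℝ≥0∞) ≤ (G.card : ℝ≥0∞) * 6 :=
        (ENNReal.mul_le_mul_iff_left (ENNReal.ofReal_pos.2 hq8).ne' ENNReal.ofReal_ne_top).1 h4
      have h8 : n ≤ G.card * 6 := by exact_mod_cast h7
      have hmG : m ≤ G.card := by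
        rw [hmdef]
        apply Nat.ceil_le.2
        rw [div_le_iff₀ (by norm_num)]
        exact_mod_cast h8
      obtain ⟨S, hSG, hScard⟩ := Finset.exists_subset_card_eq hmG
      refine ⟨S, Finset.mem_powersetCard.2
        ⟨hSG.trans (Finset.filter_subset _ _), hScard⟩, ?_⟩
      simp only [Set.mem_iInter]
      intro i hi
      exact (Finset.mem_filter.1 (hSG hi)).2
    have hperS : ∀ S ∈ Finset.powersetCard m (Finset.range n),
        μ (⋂ i ∈ S, A i) ≤ ENNReal.ofReal 6 ^ m * Q ^ (m - 1) := by
      intro S hS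
      obtain ⟨hsubS, hcard⟩ := Finset.mem_powersetCard.1 hS
      have hAint : MeasurableSet (⋂ i ∈ S, A i) :=
        Finset.measurableSet_biInter _ fun i _ => hAm i
      have hptw : ∀ ω, (⋂ i ∈ S, A i).indicator 1 ω
          ≤ ∏ i ∈ S, (ENNReal.ofReal (8/D) * occ W a D i ω) := by
        intro ω
        by_cases hω : ω ∈ ⋂ i ∈ S, A i
        · rw [Set.indicator_of_mem hω]
          apply Finset.one_le_prod'
          intro i hi
          have hi' : ENNReal.ofReal (D/8) ≤ occ W a D i ω := by
            simp only [Set.mem_iInter] at hω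
            exact hω i hi
          calc (1:ℝ≥0∞) = ENNReal.ofReal (8/D) * ENNReal.ofReal (D/8) := by
                rw [← ENNReal.ofReal_mul (by positivity),
                  show (8/D)*(D/8) = (1:ℝ) from by field_simp]
                exact ENNReal.ofReal_one.symm
            _ ≤ _ := mul_le_mul_right hi' _
        · rw [Set.indicator_of_notMem hω]
          exact zero_le
      have hinteq : ∀ ω, (∏ i ∈ S, (ENNReal.ofReal (8/D) * occ W a D i ω))
          = ENNReal.ofReal (8/D)^m * ∏ i ∈ S, occ W a D i ω := by
        intro ω
        rw [Finset.prod_mul_distrib, Finset.prod_const, hcard]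
      have hocc := occ_prod_bound hW hWj ha0 hD0 S 0 (fun _ => 0)
        (by intro h; exact absurd h (lt_irrefl 0))
        (by intro i h; exact absurd h (by omega))
        (by intro b hb h; exact absurd h (lt_irrefl 0))
      simp only [Finset.range_zero, Finset.prod_empty, mul_one, Nat.add_zero] at hocc
      rw [hcard] at hocc
      calc μ (⋂ i ∈ S, A i) = ∫⁻ ω, (⋂ i ∈ S, A i).indicator 1 ω ∂μ :=
            (lintegral_indicator_one hAint).symm
        _ ≤ ∫⁻ ω, ∏ i ∈ S, (ENNReal.ofReal (8/D) * occ W a D i ω) ∂μ := lintegral_mono hptw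
        _ = ENNReal.ofReal (8/D)^m * ∫⁻ ω, ∏ i ∈ S, occ W a D i ω ∂μ := by
            rw [lintegral_congr hinteq]
            exact lintegral_const_mul _
              (Finset.measurable_prod _ fun i _ => measurable_occ hWj a D i)
        _ ≤ ENNReal.ofReal (8/D)^m * (ENNReal.ofReal (3*D/4)^m * Q^(m-1)) :=
            mul_le_mul_right hocc _
        _ = ENNReal.ofReal 6^m * Q^(m-1) := by
            rw [← mul_assoc, ← mul_pow, ← ENNReal.ofReal_mul (by positivity),
              show (8/D)*(3*D/4) = (6:ℝ) from by field_simp; ring]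
    have hunion : {ω | ENNReal.ofReal (T / 2) ≤ volume {s ∈ Icc (0:ℝ) T | |W s ω| ≤ a}}
        ⊆ ⋃ S ∈ Finset.powersetCard m (Finset.range n), ⋂ i ∈ S, A i := by
      intro ω hω
      simp only [Set.mem_setOf_eq] at hω
      rw [hsep ω] at hω
      obtain ⟨S, hS, hmem⟩ := hkey ω hω
      exact Set.mem_biUnion hS hmem
    have hchoose : n.choose m ≤ 2^n := by
      calc n.choose m ≤ ∑ i ∈ Finset.range (n+1), n.choose i :=
            Finset.single_le_sum (fun i _ => Nat.zero_le _) (Finset.mem_range.2 (by omega))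
        _ = 2^n := Nat.sum_range_choose n
    have he1 := Real.exp_one_gt_d9
    have h2exp : (2:ℝ) ≤ Real.exp (3/4) := by
      have hee : Real.exp 1^(3:ℕ) = Real.exp 3 := by
        rw [← Real.exp_nat_mul]; norm_num
      have hee2 : Real.exp (3/4)^(4:ℕ) = Real.exp 3 := by
        rw [← Real.exp_nat_mul]; norm_num
      have h16 : (2:ℝ)^(4:ℕ) ≤ Real.exp (3/4)^(4:ℕ) := by
        rw [hee2, ← hee]
        calc (2:ℝ)^(4:ℕ) = 16 := by norm_num
          _ ≤ 2.7182818283^(3:ℕ) := by norm_num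
          _ ≤ Real.exp 1^(3:ℕ) := pow_le_pow_left₀ (by norm_num) he1.le 3
      exact le_of_pow_le_pow_left₀ (by norm_num) (Real.exp_pos _).le h16
    have h6exp : (6:ℝ) ≤ Real.exp 2 := by
      calc (6:ℝ) ≤ 2.7182818283^(2:ℕ) := by norm_num
        _ ≤ Real.exp 1^(2:ℕ) := pow_le_pow_left₀ (by norm_num) he1.le 2
        _ = Real.exp 2 := by rw [← Real.exp_nat_mul]; norm_num
    have h2e8 : 2*Real.exp (-8) ≤ Real.exp (-7) := by
      have h7 : Real.exp (-7:ℝ) = Real.exp 1 * Real.exp (-8) := by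
        rw [← Real.exp_add]; norm_num
      rw [h7]
      apply mul_le_mul_of_nonneg_right _ (Real.exp_pos _).le
      linarith
    have hcastm : ((m - 1:ℕ):ℝ) = (m:ℝ) - 1 := by
      have := Nat.cast_sub (R := ℝ) hm1
      simpa using this
    have hreal : (n.choose m : ℝ) * (6^m * (2*Real.exp (-8))^(m-1)) ≤ Real.exp (-(1/24)*x) := by
      have hb1 : (n.choose m : ℝ) ≤ (2:ℝ)^n := by exact_mod_cast hchoose
      have hb2 : (2:ℝ)^n ≤ Real.exp (3/4)^n := pow_le_pow_left₀ (by norm_num) h2exp n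
      have hb3 : (6:ℝ)^m ≤ Real.exp 2^m := pow_le_pow_left₀ (by norm_num) h6exp m
      have hb4 : (2*Real.exp (-8))^(m-1) ≤ Real.exp (-7)^(m-1) :=
        pow_le_pow_left₀ (by positivity) h2e8 _
      have hprod : (n.choose m : ℝ) * (6^m * (2*Real.exp (-8))^(m-1))
          ≤ Real.exp (3/4)^n * (Real.exp 2^m * Real.exp (-7)^(m-1)) := by
        apply mul_le_mul (hb1.trans hb2)
          (mul_le_mul hb3 hb4 (by positivity) (by positivity)) (by positivity) (by positivity)
      refine hprod.trans ?_
      have hE : Real.exp (3/4)^n * (Real.exp 2^m * Real.exp ((-7:ℝ))^(m-1))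
          = Real.exp ((n:ℝ)*(3/4) + ((m:ℝ)*2 + ((m-1:ℕ):ℝ)*(-7))) := by
        rw [← Real.exp_nat_mul, ← Real.exp_nat_mul, ← Real.exp_nat_mul,
          ← Real.exp_add, ← Real.exp_add]
      rw [hE]
      apply Real.exp_le_exp.2
      rw [hcastm]
      linarith
    calc μ {ω | ENNReal.ofReal (T / 2) ≤ volume {s ∈ Icc (0:ℝ) T | |W s ω| ≤ a}}
        ≤ μ (⋃ S ∈ Finset.powersetCard m (Finset.range n), ⋂ i ∈ S, A i) :=
          measure_mono hunion
      _ ≤ ∑ S ∈ Finset.powersetCard m (Finset.range n), μ (⋂ i ∈ S, A i) :=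
          measure_biUnion_finset_le _ _
      _ ≤ ∑ _S ∈ Finset.powersetCard m (Finset.range n), ENNReal.ofReal 6 ^ m * Q ^ (m-1) :=
          Finset.sum_le_sum hperS
      _ = (n.choose m : ℝ≥0∞) * (ENNReal.ofReal 6 ^ m * Q ^ (m-1)) := by
          rw [Finset.sum_const, Finset.card_powersetCard, Finset.card_range, nsmul_eq_mul]
      _ ≤ ENNReal.ofReal ((n.choose m : ℝ) * (6^m * (2*Real.exp (-8))^(m-1))) := by
          rw [ENNReal.ofReal_mul (by positivity), ENNReal.ofReal_mul (by positivity),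
            ENNReal.ofReal_pow (by norm_num), ENNReal.ofReal_pow (by positivity),
            ENNReal.ofReal_natCast]
          gcongr
      _ ≤ ENNReal.ofReal (Real.exp (-(1/24) * x)) := ENNReal.ofReal_le_ofReal hreal

end BrownianOccAux

/-- **Occupation-time estimate (Remark after Lemma 2.4).** There are constants
`c, c₄ > 0` such that for all `T ≥ 1`, the probability that a standard Brownian
motion spends at least time `T/2` in `[−c T^{1/3}, c T^{1/3}]` during `[0,T]`
is at most `exp(−c₄ T^{1/3})`. -/
theorem brownian_occupation_time_bound
    {Ω : Type*} [MeasurableSpace Ω] (μ : Measure Ω) (B : ℝ → Ω → ℝ)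
    (hB : IsStdBrownianMotion μ B) :
    ∃ c c₄ : ℝ, 0 < c ∧ 0 < c₄ ∧ ∀ T : ℝ, 1 ≤ T →
      μ {ω | ENNReal.ofReal (T / 2) ≤
          volume {s ∈ Icc (0:ℝ) T | |B s ω| ≤ c * T ^ ((1:ℝ)/3)}} ≤
        ENNReal.ofReal (Real.exp (-c₄ * T ^ ((1:ℝ)/3))) := by
  classical
  obtain ⟨W, N, hW, hWj, hN0, hWeq⟩ := BrownianOccAux.exists_modification hB
  refine ⟨Real.exp (-8) / 4, 1/24, by positivity, by norm_num, fun T hT => ?_⟩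
  have hsub : {ω | ENNReal.ofReal (T / 2) ≤
        volume {s ∈ Icc (0:ℝ) T | |B s ω| ≤ Real.exp (-8) / 4 * T ^ ((1:ℝ)/3)}}
      ⊆ {ω | ENNReal.ofReal (T / 2) ≤
        volume {s ∈ Icc (0:ℝ) T | |W s ω| ≤ Real.exp (-8) / 4 * T ^ ((1:ℝ)/3)}} ∪ N := by
    intro ω hω
    by_cases hN : ω ∈ N
    · exact Or.inr hN
    · left
      have heq : {s ∈ Icc (0:ℝ) T | |B s ω| ≤ Real.exp (-8) / 4 * T ^ ((1:ℝ)/3)}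
          = {s ∈ Icc (0:ℝ) T | |W s ω| ≤ Real.exp (-8) / 4 * T ^ ((1:ℝ)/3)} := by
        ext s
        simp only [Set.mem_setOf_eq]
        rw [show B s ω = W s ω from (hWeq ω hN s).symm]
      simp only [Set.mem_setOf_eq] at hω ⊢
      rwa [heq] at hω
  calc μ {ω | ENNReal.ofReal (T / 2) ≤
        volume {s ∈ Icc (0:ℝ) T | |B s ω| ≤ Real.exp (-8) / 4 * T ^ ((1:ℝ)/3)}}
      ≤ μ ({ω | ENNReal.ofReal (T / 2) ≤
        volume {s ∈ Icc (0:ℝ) T | |W s ω| ≤ Real.exp (-8) / 4 * T ^ ((1:ℝ)/3)}} ∪ N) :=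
        measure_mono hsub
    _ ≤ μ {ω | ENNReal.ofReal (T / 2) ≤
        volume {s ∈ Icc (0:ℝ) T | |W s ω| ≤ Real.exp (-8) / 4 * T ^ ((1:ℝ)/3)}} + μ N :=
        measure_union_le _ _
    _ = μ {ω | ENNReal.ofReal (T / 2) ≤
        volume {s ∈ Icc (0:ℝ) T | |W s ω| ≤ Real.exp (-8) / 4 * T ^ ((1:ℝ)/3)}} := by
        rw [hN0, add_zero]
    _ ≤ ENNReal.ofReal (Real.exp (-(1/24) * T ^ ((1:ℝ)/3))) := BrownianOccAux.main_est hW hWj T hT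
end
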